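/- Let G be a graph admitting a completion F into an interval graph, and let A ⊆ V(G). Then the number of neighborhood classes with respect to A (equivalence classes of vertices outside A under v₁ ~ v₂ iff N_G(v₁) ∩ A = N_G(v₂) ∩ A) is at most (2|A|+1)² + |F|. -/

import Mathlib

/-- A combinatorial interval model of a graph `G`: an injection from the `2n` events
`beg v` (encoded `Sum.inl v`) and `end v` (encoded `Sum.inr v`) onto the positions
`{1, …, 2n}` such that each interval starts before it ends, and two distinct
vertices are non-adjacent iff their intervals are disjoint. -/
structure IntervalModel {V : Type*} [Fintype V] (G : SimpleGraph V) where
  σ : V ⊕ V → ℕ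
  inj : Function.Injective σ
  lb : ∀ e, 1 ≤ σ e
  ub : ∀ e, σ e ≤ 2 * Fintype.card V
  surj : ∀ i : ℕ, 1 ≤ i → i ≤ 2 * Fintype.card V → ∃ e, σ e = i
  begEnd : ∀ v, σ (Sum.inl v) < σ (Sum.inr v)
  adjIff : ∀ u v, u ≠ v →
    (¬ G.Adj u v ↔ σ (Sum.inr v) < σ (Sum.inl u) ∨ σ (Sum.inr u) < σ (Sum.inl v))

/-- The section of an interval model at position `p`:
vertices whose interval is "pinned" just after position `p`. -/
def intervalSection {V : Type*} [Fintype V] {G : SimpleGraph V}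
    (M : IntervalModel G) (p : ℕ) : Set V :=
  {v | M.σ (Sum.inl v) ≤ p ∧ p < M.σ (Sum.inr v)}

/-- The events of a set of vertices. -/
def eventsOf {V : Type*} (X : Set V) : Set (V ⊕ V) :=
  (Sum.inl : V → V ⊕ V) '' X ∪ (Sum.inr : V → V ⊕ V) '' X

/-- The vertex set (in the ambient graph) of a connected component of an induced subgraph. -/
def compSupp {V : Type*} {s : Set V} {H : SimpleGraph s}
    (c : H.ConnectedComponent) : Set V :=
  Subtype.val '' c.supp

open Classical in
lemma card_image_factor {α β γ : Type*} [DecidableEq β] [DecidableEq γ] [Nonempty β]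
    (s : Finset α) (f : α → β) (g : α → γ)
    (h : ∀ v ∈ s, ∀ w ∈ s, g v = g w → f v = f w) :
    (s.image f).card ≤ (s.image g).card := by
  have hsub : s.image f ⊆ (s.image g).image
      (fun c => if hc : ∃ a, a ∈ s ∧ g a = c then f hc.choose else Classical.arbitrary β) := by
    intro b hb
    rw [Finset.mem_image] at hb
    obtain ⟨a, ha, rfl⟩ := hb
    rw [Finset.mem_image]
    refine ⟨g a, Finset.mem_image_of_mem _ ha, ?_⟩
    have hc : ∃ x, x ∈ s ∧ g x = g a := ⟨a, ha, rfl⟩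
    rw [dif_pos hc]
    exact h _ hc.choose_spec.1 _ ha hc.choose_spec.2
  calc (s.image f).card ≤ _ := Finset.card_le_card hsub
    _ ≤ (s.image g).card := Finset.card_image_le


/-- If `G` admits a completion `F` into an interval graph and `A ⊆ V(G)`, then
the number of neighborhood classes with respect to `A` (distinct sets `N_G(v) ∩ A`
over `v ∉ A`) is at most `(2|A|+1)² + |F|`. -/
theorem statement_6 {V : Type*} [Fintype V] [DecidableEq V]
    (G F : SimpleGraph V) [DecidableRel G.Adj] [DecidableRel F.Adj]
    (hdisj : ∀ u v, F.Adj u v → ¬ G.Adj u v)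
    (hint : Nonempty (IntervalModel (G ⊔ F)))
    (A : Finset V) :
    ((Finset.univ.filter fun v : V => v ∉ A).image
        (fun v => A.filter fun a => G.Adj v a)).card
      ≤ (2 * A.card + 1) ^ 2 + F.edgeFinset.card := by
  classical
  rcases isEmpty_or_nonempty V with hV | hV
  · simp [Finset.univ_eq_empty]
  obtain ⟨M⟩ := hint
  set s : Finset V := Finset.univ.filter (fun v : V => v ∉ A) with hs
  set f : V → Finset V := fun v => A.filter fun a => G.Adj v a with hf
  set f' : V → Finset V := fun v => A.filter fun a => (G ⊔ F).Adj v a with hf'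
  set EA : Finset (V ⊕ V) := A.image Sum.inl ∪ A.image Sum.inr with hEA
  have hEAcard : EA.card = 2 * A.card := by
    rw [hEA, Finset.card_union_of_disjoint, Finset.card_image_of_injective _ Sum.inl_injective,
      Finset.card_image_of_injective _ Sum.inr_injective]
    · ring
    · simp [Finset.disjoint_left]
  set g : V → ℕ × ℕ := fun v =>
    ((EA.filter fun e => M.σ e < M.σ (Sum.inl v)).card,
     (EA.filter fun e => M.σ e < M.σ (Sum.inr v)).card) with hg
  have L1 : ∀ t t' : ℕ,
      (EA.filter fun e => M.σ e < t).card = (EA.filter fun e => M.σ e < t').card →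
      (EA.filter fun e => M.σ e < t) = (EA.filter fun e => M.σ e < t') := by
    intro t t' hcard
    rcases le_total t t' with h | h
    · exact Finset.eq_of_subset_of_card_le
        (Finset.monotone_filter_right EA (fun x _ hx => lt_of_lt_of_le hx h)) hcard.ge
    · exact (Finset.eq_of_subset_of_card_le
        (Finset.monotone_filter_right EA (fun x _ hx => lt_of_lt_of_le hx h)) hcard.le).symm
  have key : ∀ u : V, u ∉ A → ∀ a ∈ A,
      (¬ (G ⊔ F).Adj u a ↔
        (Sum.inr a ∈ EA.filter fun e => M.σ e < M.σ (Sum.inl u)) ∨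
        (Sum.inl a ∉ EA.filter fun e => M.σ e < M.σ (Sum.inr u))) := by
    intro u hu a ha
    have hne : u ≠ a := fun h => hu (h ▸ ha)
    have hina : Sum.inr a ∈ EA := by simp [hEA, ha]
    have hila : Sum.inl a ∈ EA := by simp [hEA, ha]
    rw [M.adjIff u a hne]
    apply or_congr
    · simp [Finset.mem_filter, hina]
    · constructor
      · intro h hmem
        rw [Finset.mem_filter] at hmem
        exact absurd hmem.2 (not_lt.mpr h.le)
      · intro h
        have h1 : ¬ M.σ (Sum.inl a) < M.σ (Sum.inr u) := by
          intro hlt; exact h (Finset.mem_filter.mpr ⟨hila, hlt⟩)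
        have h2 : M.σ (Sum.inr u) ≠ M.σ (Sum.inl a) := by
          intro heq; exact absurd (M.inj heq) (by simp)
        exact lt_of_le_of_ne (not_lt.mp h1) h2
  have L2 : ∀ v ∈ s, ∀ w ∈ s, g v = g w → f' v = f' w := by
    intro v hv w hw hgvw
    have hvA : v ∉ A := by simpa [hs] using hv
    have hwA : w ∉ A := by simpa [hs] using hw
    have h1 : (EA.filter fun e => M.σ e < M.σ (Sum.inl v))
        = (EA.filter fun e => M.σ e < M.σ (Sum.inl w)) := L1 _ _ (congrArg Prod.fst hgvw)
    have h2 : (EA.filter fun e => M.σ e < M.σ (Sum.inr v))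
        = (EA.filter fun e => M.σ e < M.σ (Sum.inr w)) := L1 _ _ (congrArg Prod.snd hgvw)
    ext a
    simp only [hf', Finset.mem_filter, and_congr_right_iff]
    intro ha
    have hkv := key v hvA a ha
    rw [h1, h2] at hkv
    exact not_iff_not.mp (hkv.trans (key w hwA a ha).symm)
  have B1 : (s.image f').card ≤ (2 * A.card + 1) ^ 2 := by
    calc (s.image f').card ≤ (s.image g).card := card_image_factor s f' g L2
      _ ≤ ((Finset.range (2 * A.card + 1)) ×ˢ (Finset.range (2 * A.card + 1))).card := by
          apply Finset.card_le_card
          intro p hp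
          rw [Finset.mem_image] at hp
          obtain ⟨v, _, rfl⟩ := hp
          simp only [Finset.mem_product, Finset.mem_range, hg]
          constructor <;>
            exact lt_of_le_of_lt (le_trans (Finset.card_filter_le _ _) hEAcard.le)
              (Nat.lt_succ_self _)
      _ = (2 * A.card + 1) ^ 2 := by rw [Finset.card_product, Finset.card_range, sq]
  -- split according to F-edges into A
  set P : V → Prop := fun v => ∃ a ∈ A, F.Adj v a with hP
  have hsplit : s.image f ⊆ (s.filter (fun v => ¬ P v)).image f ∪ (s.filter P).image f := by
    intro b hb
    rw [Finset.mem_image] at hb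
    obtain ⟨v, hv, rfl⟩ := hb
    rw [Finset.mem_union]
    by_cases hPv : P v
    · exact Or.inr (Finset.mem_image_of_mem _ (Finset.mem_filter.mpr ⟨hv, hPv⟩))
    · exact Or.inl (Finset.mem_image_of_mem _ (Finset.mem_filter.mpr ⟨hv, hPv⟩))
  have hT1 : (s.filter (fun v => ¬ P v)).image f ⊆ s.image f' := by
    intro b hb
    rw [Finset.mem_image] at hb
    obtain ⟨v, hv, rfl⟩ := hb
    rw [Finset.mem_filter] at hv
    have heq : f v = f' v := by
      apply Finset.filter_congr
      intro a ha
      have hnF : ¬ F.Adj v a := fun hFa => hv.2 ⟨a, ha, hFa⟩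
      simp [SimpleGraph.sup_adj, hnF]
    rw [heq]
    exact Finset.mem_image_of_mem _ hv.1
  have hT2 : ((s.filter P).image f).card ≤ F.edgeFinset.card := by
    haveI : Nonempty (Sym2 V) := ⟨s(hV.some, hV.some)⟩
    apply Finset.card_le_card_of_injOn
      (fun b => if hb : ∃ v, v ∈ s.filter P ∧ f v = b then
        s(hb.choose, if hc : ∃ a ∈ A, F.Adj hb.choose a then hc.choose else hb.choose)
        else Classical.arbitrary (Sym2 V))
    · intro b hb
      simp only [Finset.mem_coe] at hb ⊢
      rw [Finset.mem_image] at hb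
      obtain ⟨v, hv, rfl⟩ := hb
      have hex : ∃ v', v' ∈ s.filter P ∧ f v' = f v := ⟨v, hv, rfl⟩
      rw [dif_pos hex]
      have hPv : P hex.choose := (Finset.mem_filter.mp hex.choose_spec.1).2
      rw [dif_pos hPv]
      have := hPv.choose_spec
      simp only [Finset.mem_coe, SimpleGraph.mem_edgeFinset, SimpleGraph.mem_edgeSet]
      exact hPv.choose_spec.2
    · intro b hb b' hb' heq
      simp only [Finset.coe_image, Set.mem_image, Finset.mem_coe] at hb hb'
      obtain ⟨v, hv, rfl⟩ := hb
      obtain ⟨v', hv', rfl⟩ := hb'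
      have hex : ∃ w, w ∈ s.filter P ∧ f w = f v := ⟨v, hv, rfl⟩
      have hex' : ∃ w, w ∈ s.filter P ∧ f w = f v' := ⟨v', hv', rfl⟩
      dsimp only at heq
      rw [dif_pos hex, dif_pos hex'] at heq
      have hPw : P hex.choose := (Finset.mem_filter.mp hex.choose_spec.1).2
      have hPw' : P hex'.choose := (Finset.mem_filter.mp hex'.choose_spec.1).2
      rw [dif_pos hPw, dif_pos hPw'] at heq
      have hwA : hex.choose ∉ A := by
        have := Finset.mem_filter.mp (Finset.mem_filter.mp hex.choose_spec.1).1
        simpa using this.2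
      have haA' : hPw'.choose ∈ A := hPw'.choose_spec.1
      rw [Sym2.eq_iff] at heq
      rcases heq with ⟨h1, _⟩ | ⟨h1, _⟩
      · rw [← hex.choose_spec.2, ← hex'.choose_spec.2, h1]
      · exact absurd (h1 ▸ haA') hwA
  calc (s.image f).card
      ≤ ((s.filter (fun v => ¬ P v)).image f ∪ (s.filter P).image f).card :=
        Finset.card_le_card hsplit
    _ ≤ ((s.filter (fun v => ¬ P v)).image f).card + ((s.filter P).image f).card :=
        Finset.card_union_le _ _
    _ ≤ (s.image f').card + F.edgeFinset.card :=
        Nat.add_le_add (Finset.card_le_card hT1) hT2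
    _ ≤ (2 * A.card + 1) ^ 2 + F.edgeFinset.card := Nat.add_le_add_right B1 _
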